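/- Let G be a group, let A and B be subgroups of G with B malnormal, and let g, h ∈ G be such that A ∩ g B g⁻¹ ≠ {1}. Then there exists a ∈ A with a (A ∩ g B g⁻¹) a⁻¹ = A ∩ h B h⁻¹ if and only if the double cosets A g B and A h B coincide. -/

import Mathlib

private lemma conj_comp' {G : Type*} [Group G] (x g : G) :
    (MulAut.conj x).toMonoidHom.comp (MulAut.conj g).toMonoidHom
      = (MulAut.conj (x * g)).toMonoidHom := by
  ext y; simp [mul_assoc]

private lemma map_conj_self' {G : Type*} [Group G] {H : Subgroup G} {x : G} (hx : x ∈ H) :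
    Subgroup.map (MulAut.conj x).toMonoidHom H = H := by
  apply le_antisymm
  · rintro y ⟨b, hb, rfl⟩
    exact H.mul_mem (H.mul_mem hx hb) (H.inv_mem hx)
  · intro y hy
    exact ⟨x⁻¹ * y * x, H.mul_mem (H.mul_mem (H.inv_mem hx) hy) hx, by simp [mul_assoc]⟩

private lemma map_conj_inf' {G : Type*} [Group G] (A B : Subgroup G) {x : G} (g : G)
    (hx : x ∈ A) :
    Subgroup.map (MulAut.conj x).toMonoidHom
        (A ⊓ Subgroup.map (MulAut.conj g).toMonoidHom B)
      = A ⊓ Subgroup.map (MulAut.conj (x * g)).toMonoidHom B := by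
  rw [Subgroup.map_inf _ _ _ (MulAut.conj x).injective, map_conj_self' hx,
    Subgroup.map_map, conj_comp']

theorem conjugate_intersection_iff_doubleCoset {G : Type*} [Group G]
    (A B : Subgroup G)
    (hmal : ∀ x : G, Subgroup.map (MulAut.conj x).toMonoidHom B ⊓ B ≠ ⊥ → x ∈ B)
    (g h : G)
    (hne : A ⊓ Subgroup.map (MulAut.conj g).toMonoidHom B ≠ ⊥) :
    (∃ a ∈ A,
        Subgroup.map (MulAut.conj a).toMonoidHom
            (A ⊓ Subgroup.map (MulAut.conj g).toMonoidHom B) =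
          A ⊓ Subgroup.map (MulAut.conj h).toMonoidHom B) ↔
      {x : G | ∃ a ∈ A, ∃ b ∈ B, x = a * g * b} =
        {x : G | ∃ a ∈ A, ∃ b ∈ B, x = a * h * b} := by
  constructor
  · rintro ⟨a, ha, heq⟩
    rw [map_conj_inf' A B g ha] at heq
    -- get nontrivial element of A ⊓ (a*g) B (a*g)⁻¹
    rw [Subgroup.ne_bot_iff_exists_ne_one] at hne
    obtain ⟨⟨x, hxA, hxB⟩, hx1⟩ := hne
    have hx1' : x ≠ 1 := fun h => hx1 (Subtype.ext h)
    -- conjugate by a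
    have hx' : a * x * a⁻¹ ∈ A ⊓ Subgroup.map (MulAut.conj h).toMonoidHom B := by
      rw [← heq, ← map_conj_inf' A B g ha]
      exact ⟨x, ⟨hxA, hxB⟩, rfl⟩
    obtain ⟨hA', hB'⟩ := hx'
    obtain ⟨b, hb, hbx⟩ := hxB
    obtain ⟨b', hb', hbx'⟩ := hB'
    simp only [MulEquiv.coe_toMonoidHom, MulAut.conj_apply] at hbx hbx'
    have hbne : b ≠ 1 := by rintro rfl; simp at hbx; exact hx1' hbx.symm
    -- key: t = h⁻¹ * a * g ∈ B
    have hkey : h⁻¹ * (a * g) ∈ B := by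
      apply hmal
      rw [Subgroup.ne_bot_iff_exists_ne_one]
      refine ⟨⟨b', ⟨b, hb, ?_⟩, hb'⟩, ?_⟩
      · simp only [MulEquiv.coe_toMonoidHom, MulAut.conj_apply]
        have : h⁻¹ * (a * g) * b * (h⁻¹ * (a * g))⁻¹ = h⁻¹ * (a * g * b * g⁻¹ * a⁻¹) * h := by
          group
        rw [this]
        have : a * g * b * g⁻¹ * a⁻¹ = a * x * a⁻¹ := by rw [← hbx]; group
        rw [this, ← hbx']; group
      · have hb'1 : b' ≠ 1 := by
          rintro rfl
          apply hx1'
          have h1 : a * x * a⁻¹ = 1 := by rw [← hbx']; group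
          calc x = a⁻¹ * (a * x * a⁻¹) * a := by group
            _ = 1 := by rw [h1]; group
        exact fun h => hb'1 (congrArg Subtype.val h)
    -- g = a⁻¹ * h * (h⁻¹ * a * g), so double cosets agree
    set k := h⁻¹ * (a * g) with hk
    ext y
    simp only [Set.mem_setOf_eq]
    constructor
    · rintro ⟨a₁, ha₁, b₁, hb₁, rfl⟩
      exact ⟨a₁ * a⁻¹, A.mul_mem ha₁ (A.inv_mem ha), k * b₁, B.mul_mem hkey hb₁, by simp only [hk]; group⟩
    · rintro ⟨a₁, ha₁, b₁, hb₁, rfl⟩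
      exact ⟨a₁ * a, A.mul_mem ha₁ ha, k⁻¹ * b₁, B.mul_mem (B.inv_mem hkey) hb₁, by simp only [hk]; group⟩
  · intro hset
    have hg : g ∈ {x : G | ∃ a ∈ A, ∃ b ∈ B, x = a * h * b} := by
      rw [← hset]; exact ⟨1, A.one_mem, 1, B.one_mem, by group⟩
    obtain ⟨a, ha, b, hb, hgab⟩ := hg
    refine ⟨a⁻¹, A.inv_mem ha, ?_⟩
    rw [map_conj_inf' A B g (A.inv_mem ha)]
    congr 1
    have : a⁻¹ * g = h * b := by rw [hgab]; group
    rw [this, ← conj_comp', ← Subgroup.map_map, map_conj_self' hb]
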